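/- The family l : List α ↦ (l.map w).prod is summable and ∑' (l : List α), (l.map w).prod = (1 − A)⁻¹. Consequently, assigning to each list l the probability (1 − A) * (l.map w).prod defines a probability distribution on List α; moreover, when A > 0 this equals A^(l.length) * (1 − A) * ∏_{x ∈ l} (w x / A), i.e. the probability that the sequence sampler — which draws a geometric length ℓ with P(ℓ) = A^ℓ(1 − A) and then ℓ independent components each with probability w x / A — outputs l. Hence the Boltzmann sampler for Seq(𝒜) assigns each sequence its Boltzmann probability. -/

import Mathlib

open scoped ENNReal

private lemma tsum_pi_fin_prod' {α : Type*} (g : α → ℝ≥0∞) (n : ℕ) :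
    ∑' f : Fin n → α, ∏ i, g (f i) = (∑' a, g a) ^ n := by
  induction n with
  | zero =>
    haveI : Unique (Fin 0 → α) := ⟨⟨fun i => i.elim0⟩, fun f => funext fun i => i.elim0⟩
    rw [tsum_eq_single (default : Fin 0 → α) (fun b hb => absurd (Subsingleton.elim b default) hb)]
    simp
  | succ n ih =>
    calc ∑' f : Fin (n+1) → α, ∏ i, g (f i)
        = ∑' p : α × (Fin n → α), ∏ i, g ((Fin.cons p.1 p.2 : Fin (n+1) → α) i) := by
          exact ((Fin.consEquiv (fun _ : Fin (n+1) => α)).tsum_eq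
            (fun f : Fin (n+1) → α => ∏ i, g (f i))).symm
      _ = ∑' p : α × (Fin n → α), g p.1 * ∏ i, g (p.2 i) := by
          congr 1; funext p; rw [Fin.prod_univ_succ]; simp
      _ = (∑' a, g a) * (∑' f : Fin n → α, ∏ i, g (f i)) := by
          rw [ENNReal.tsum_prod']
          simp_rw [ENNReal.tsum_mul_left]
          rw [ENNReal.tsum_mul_right]
      _ = (∑' a, g a) ^ (n+1) := by rw [ih, pow_succ, mul_comm]

private lemma tsum_list_prod' {α : Type*} (g : α → ℝ≥0∞) :
    ∑' l : List α, (l.map g).prod = (1 - ∑' a, g a)⁻¹ := by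
  have hmap : ∀ l : List α, (l.map g).prod = ∏ i, g (l.get i) := by
    intro l
    conv_lhs => rw [← List.ofFn_get l]
    rw [List.map_ofFn, List.prod_ofFn]
    rfl
  calc ∑' l : List α, (l.map g).prod
      = ∑' p : Σ n, Fin n → α, ∏ i, g (p.2 i) := by
        rw [← Equiv.tsum_eq (List.equivSigmaTuple)
          (fun p : Σ n, Fin n → α => ∏ i, g (p.2 i))]
        simp_rw [hmap]
        rfl
    _ = ∑' n : ℕ, ∑' f : Fin n → α, ∏ i, g (f i) := ENNReal.tsum_sigma' _
    _ = ∑' n : ℕ, (∑' a, g a) ^ n := by simp_rw [tsum_pi_fin_prod']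
    _ = (1 - ∑' a, g a)⁻¹ := ENNReal.tsum_geometric _

/-- The Boltzmann sampler for `Seq(𝒜)`: the total Boltzmann weight of all
finite sequences is `(1 − A)⁻¹`, the normalised weights form a probability
distribution on `List α`, and (for `A > 0`) this distribution coincides with
drawing a geometric length `ℓ` with `P(ℓ) = A^ℓ (1 − A)` and then `ℓ`
independent components with probabilities `w x / A`. -/
theorem seq_boltzmann_sampler
    (α : Type*) [Countable α]
    (w : α → ℝ) (hw : ∀ x, 0 ≤ w x) (hsum : Summable w)
    (A : ℝ) (hA : A = ∑' x, w x) (hA1 : A < 1) :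
    Summable (fun l : List α => (l.map w).prod)
    ∧ (∑' l : List α, (l.map w).prod) = (1 - A)⁻¹
    ∧ (∀ l : List α, 0 ≤ (1 - A) * (l.map w).prod)
    ∧ (∑' l : List α, (1 - A) * (l.map w).prod) = 1
    ∧ (0 < A → ∀ l : List α,
        (1 - A) * (l.map w).prod
          = A ^ l.length * (1 - A) * (l.map fun x => w x / A).prod) := by
  have A0 : 0 ≤ A := hA ▸ tsum_nonneg hw
  have h1A : (0:ℝ) < 1 - A := by linarith
  set g : α → ℝ≥0∞ := fun a => ENNReal.ofReal (w a) with hg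
  have hS : (∑' a, g a) = ENNReal.ofReal A := by
    rw [hA, ENNReal.ofReal_tsum_of_nonneg hw hsum]
  have hprodnn : ∀ l : List α, 0 ≤ (l.map w).prod := by
    intro l
    apply List.prod_nonneg
    intro x hx
    obtain ⟨a, _, rfl⟩ := List.mem_map.mp hx
    exact hw a
  have hprod : ∀ l : List α, (l.map g).prod = ENNReal.ofReal ((l.map w).prod) := by
    intro l
    induction l with
    | nil => simp
    | cons a t ih =>
      simp only [List.map_cons, List.prod_cons, ih]
      rw [← ENNReal.ofReal_mul (hw a)]
  have hT : ∑' l : List α, (l.map g).prod = (ENNReal.ofReal (1 - A))⁻¹ := by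
    rw [tsum_list_prod', hS, ENNReal.ofReal_sub 1 A0, ENNReal.ofReal_one]
  have hTne : ∑' l : List α, (l.map g).prod ≠ ⊤ := by
    rw [hT]
    exact ENNReal.inv_ne_top.mpr (ENNReal.ofReal_pos.mpr h1A).ne'
  have hsummable : Summable (fun l : List α => (l.map w).prod) := by
    have := ENNReal.summable_toReal hTne
    refine this.congr fun l => ?_
    rw [hprod l, ENNReal.toReal_ofReal (hprodnn l)]
  have htsum : (∑' l : List α, (l.map w).prod) = (1 - A)⁻¹ := by
    have := ENNReal.tsum_toReal_eq (f := fun l : List α => (l.map g).prod)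
      (fun l => by rw [hprod l]; exact ENNReal.ofReal_ne_top)
    rw [hT] at this
    have h2 : (∑' l : List α, ((l.map g).prod).toReal) = ∑' l : List α, (l.map w).prod := by
      congr 1; funext l; rw [hprod l, ENNReal.toReal_ofReal (hprodnn l)]
    rw [h2] at this
    rw [← this, ENNReal.toReal_inv, ENNReal.toReal_ofReal h1A.le]
  refine ⟨hsummable, htsum, fun l => mul_nonneg h1A.le (hprodnn l), ?_, ?_⟩
  · rw [tsum_mul_left, htsum, mul_inv_cancel₀ h1A.ne']
  · intro hA0 l
    have key : A ^ l.length * (l.map fun x => w x / A).prod = (l.map w).prod := by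
      induction l with
      | nil => simp
      | cons a t ih =>
        simp only [List.map_cons, List.prod_cons, List.length_cons, pow_succ]
        rw [← ih]
        field_simp
    rw [← key]
    ring
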